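/- arXiv:2201.09200 — 2 statements merged into one kernel-verified Lean document; each statement's English description precedes it below -/
import Mathlib

section
/- Fix distributions P_N ≠ P_A on the finite alphabet X with common support and fix integers t ≥ 1 and l ≥ 1. Viewing M as a real variable with M > t + l, define f(M) = l·D(P_A ‖ P_mix^{t,l}(M)) + (M − t − l)·D(P_N ‖ P_mix^{t,l}(M)) where P_mix^{t,l}(M) = (l·P_A + (M − t − l)·P_N)/(M − t). Then f is differentiable in M with derivative f'(M) = D(P_N ‖ P_mix^{t,l}(M)); in particular f is strictly increasing in M whenever D(P_N ‖ P_mix^{t,l}(M)) > 0. -/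
open Finset MeasureTheory Filter

noncomputable section

/-- A probability mass function on a finite alphabet `X`. -/
def IsProbDist {X : Type*} [Fintype X] (P : X → ℝ) : Prop :=
  (∀ x, 0 ≤ P x) ∧ ∑ x, P x = 1

/-- Kullback–Leibler divergence between two mass functions on a finite alphabet. -/
def KL {X : Type*} [Fintype X] (P Q : X → ℝ) : ℝ :=
  ∑ x, P x * Real.log (P x / Q x)

/-- The collection `S` of candidate outlier index sets:
nonempty subsets of `[M]` of cardinality at most `T`. -/
def SS (M T : ℕ) : Finset (Finset (Fin M)) :=
  Finset.univ.filter fun B => B.Nonempty ∧ B.card ≤ T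

/-- `jmap B i = j` when `i` is the `j`-th smallest element of `B` (1-based). -/
def jmap {M : ℕ} (B : Finset (Fin M)) (i : Fin M) : ℕ :=
  (B.filter fun i' => i' ≤ i).card

/-- The statistic `G_B(Q)`: sum over `t ∉ B` of the KL divergence of `Q t` from the
average of the `Q l`, `l ∉ B`. -/
def Gfun {X : Type*} [Fintype X] {M : ℕ} (B : Finset (Fin M)) (Q : Fin M → X → ℝ) : ℝ :=
  ∑ t ∈ Bᶜ, KL (Q t) fun x => (∑ l ∈ Bᶜ, Q l x) / ((M : ℝ) - B.card)

/-- Empirical distribution of a length-`n` sequence. -/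
def emp {X : Type*} [Fintype X] [DecidableEq X] {n : ℕ} (x : Fin n → X) (a : X) : ℝ :=
  ((Finset.univ.filter fun k => x k = a).card : ℝ) / n

/-- Scoring function `S_C(x^n) = G_C` of the empirical distributions. -/
def score {X : Type*} [Fintype X] [DecidableEq X] {M n : ℕ} (C : Finset (Fin M))
    (xs : Fin M → Fin n → X) : ℝ :=
  Gfun C fun i => emp (xs i)

/-- Minimum of the scores over `S \ {B}`. -/
def minScore {X : Type*} [Fintype X] [DecidableEq X] {M n : ℕ} (T : ℕ) (B : Finset (Fin M))
    (xs : Fin M → Fin n → X) : ℝ :=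
  sInf ((fun C => score C xs) '' {C | C ∈ SS M T ∧ C ≠ B})

open Classical in
/-- The threshold-based test `Ψ_n`: output `some B` (hypothesis `H_B`) if
`S_B < min_{C ∈ S\{B}} S_C` and this minimum exceeds `λ`; otherwise output `none` (`H_r`). -/
def Psi {X : Type*} [Fintype X] [DecidableEq X] {M n : ℕ} (T : ℕ) (lam : ℝ)
    (xs : Fin M → Fin n → X) : Option (Finset (Fin M)) :=
  if h : ∃ B ∈ SS M T, score B xs < minScore T B xs ∧ lam < minScore T B xs
  then some h.choose else none

/-- Generating distribution of the `i`-th sequence under hypothesis `H_B`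
(with `B = ∅` giving the null hypothesis `H_r`). -/
def pdist {X : Type*} [Fintype X] {M : ℕ} (B : Finset (Fin M)) (PN : X → ℝ)
    (PA : ℕ → X → ℝ) (i : Fin M) : X → ℝ :=
  if i ∈ B then PA (jmap B i) else PN

open Classical in
/-- Probability of the event `A` on `M` length-`n` sequences, where the `i`-th sequence is
i.i.d. from `P_{A,ȷ_B(i)}` if `i ∈ B` and from `P_N` otherwise, independently across sequences. -/
def probB {X : Type*} [Fintype X] {M : ℕ} (n : ℕ) (B : Finset (Fin M)) (PN : X → ℝ)
    (PA : ℕ → X → ℝ) (A : (Fin M → Fin n → X) → Prop) : ℝ :=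
  ∑ xs : Fin M → Fin n → X, if A xs then ∏ i, ∏ k, pdist B PN PA i (xs i k) else 0

/-- Misclassification error probability `β_B(φ_n)` of a test `φ`. -/
def betaT {X : Type*} [Fintype X] {M n : ℕ} (φ : (Fin M → Fin n → X) → Option (Finset (Fin M)))
    (B : Finset (Fin M)) (PN : X → ℝ) (PA : ℕ → X → ℝ) : ℝ :=
  probB n B PN PA fun xs => φ xs ≠ some B ∧ φ xs ≠ none

/-- False reject probability `ζ_B(φ_n)` of a test `φ`. -/
def zetaT {X : Type*} [Fintype X] {M n : ℕ} (φ : (Fin M → Fin n → X) → Option (Finset (Fin M)))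
    (B : Finset (Fin M)) (PN : X → ℝ) (PA : ℕ → X → ℝ) : ℝ :=
  probB n B PN PA fun xs => φ xs = none

/-- False alarm probability `P_fa(φ_n)` of a test `φ` (all sequences i.i.d. from `P_N`). -/
def PfaT {X : Type*} [Fintype X] {M n : ℕ} (φ : (Fin M → Fin n → X) → Option (Finset (Fin M)))
    (PN : X → ℝ) (PA : ℕ → X → ℝ) : ℝ :=
  probB n (∅ : Finset (Fin M)) PN PA fun xs => φ xs ≠ none

/-- A valid tuple of nominal and anomalous distributions: all are probability distributions
with common support, and each anomalous distribution differs from the nominal one. -/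
def ValidTuple {X : Type*} [Fintype X] (T : ℕ) (PN : X → ℝ) (PA : ℕ → X → ℝ) : Prop :=
  IsProbDist PN ∧ (∀ j ∈ Finset.Icc 1 T, IsProbDist (PA j)) ∧
    (∀ j ∈ Finset.Icc 1 T, ∀ x, PA j x = 0 ↔ PN x = 0) ∧
    ∀ j ∈ Finset.Icc 1 T, PA j ≠ PN

/-- The mixture distribution `P_mix^{(B,C)}`. -/
def Pmix {X : Type*} [Fintype X] {M : ℕ} (B C : Finset (Fin M)) (PN : X → ℝ)
    (PA : ℕ → X → ℝ) (x : X) : ℝ :=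
  ((∑ i ∈ B \ C, PA (jmap B i) x) + ∑ _i ∈ Bᶜ \ C, PN x) / ((M : ℝ) - C.card)

/-- `GD(B, C, P_N, P_B)`. -/
def GD {X : Type*} [Fintype X] {M : ℕ} (B C : Finset (Fin M)) (PN : X → ℝ)
    (PA : ℕ → X → ℝ) : ℝ :=
  (∑ i ∈ B \ C, KL (PA (jmap B i)) (Pmix B C PN PA)) +
    ∑ _i ∈ Bᶜ \ C, KL PN (Pmix B C PN PA)

/-- `GD(B, P_N, P_B) = min_{C ∈ S \ {B}} GD(B, C, P_N, P_B)`. -/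
def GDmin {X : Type*} [Fintype X] {M : ℕ} (T : ℕ) (B : Finset (Fin M)) (PN : X → ℝ)
    (PA : ℕ → X → ℝ) : ℝ :=
  sInf {r | ∃ C, (C ∈ SS M T ∧ C ≠ B) ∧ r = GD B C PN PA}

/-- Expectation of `f` under the mass function `P`. -/
def expect {X : Type*} [Fintype X] (P : X → ℝ) (f : X → ℝ) : ℝ := ∑ x, P x * f x

/-- Variance of `f` under the mass function `P`. -/
def varD {X : Type*} [Fintype X] (P : X → ℝ) (f : X → ℝ) : ℝ :=
  expect P fun x => (f x - expect P f) ^ 2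

/-- The sum `ı_{B,C}` of information densities. -/
def iota {X : Type*} [Fintype X] {M : ℕ} (B C : Finset (Fin M)) (PN : X → ℝ)
    (PA : ℕ → X → ℝ) (xs : Fin M → X) : ℝ :=
  (∑ j ∈ B \ C, Real.log (PA (jmap B j) (xs j) / Pmix B C PN PA (xs j))) +
    ∑ j ∈ Bᶜ \ C, Real.log (PN (xs j) / Pmix B C PN PA (xs j))

/-- Diagonal entries `V(B, C)` of the covariance matrix: linear combination of variances
of the information densities. -/
def Vdiag {X : Type*} [Fintype X] {M : ℕ} (B C : Finset (Fin M)) (PN : X → ℝ)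
    (PA : ℕ → X → ℝ) : ℝ :=
  (∑ j ∈ B \ C, varD (PA (jmap B j)) fun x => Real.log (PA (jmap B j) x / Pmix B C PN PA x)) +
    ∑ _j ∈ Bᶜ \ C, varD PN fun x => Real.log (PN x / Pmix B C PN PA x)

/-- Off-diagonal entries `Cov(C_i, C_k) = E[ı_{B,C_i} ı_{B,C_k}]` with independent
`X_j ~ P_{A,ȷ_B(j)}` for `j ∈ B` and `X_j ~ P_N` otherwise. -/
def covD {X : Type*} [Fintype X] {M : ℕ} (B Ci Ck : Finset (Fin M)) (PN : X → ℝ)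
    (PA : ℕ → X → ℝ) : ℝ :=
  ∑ xs : Fin M → X, (∏ j, pdist B PN PA j (xs j)) * (iota B Ci PN PA xs * iota B Ck PN PA xs)

/-- The covariance matrix `V(B, P_N, P_B)` with respect to an enumeration `enum` of `S \ {B}`. -/
def Vmat {X : Type*} [Fintype X] {M k : ℕ} (B : Finset (Fin M)) (enum : Fin k → Finset (Fin M))
    (PN : X → ℝ) (PA : ℕ → X → ℝ) : Matrix (Fin k) (Fin k) ℝ :=
  Matrix.of fun i j => if i = j then Vdiag B (enum i) PN PA else covD B (enum i) (enum j) PN PA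

/-- Density of a multivariate Gaussian with mean `μ` and covariance matrix `V`. -/
def gaussDensity {ι : Type*} [Fintype ι] [DecidableEq ι] (μ : ι → ℝ) (V : Matrix ι ι ℝ)
    (x : ι → ℝ) : ℝ :=
  Real.exp (-(1 / 2) * dotProduct (x - μ) (V⁻¹.mulVec (x - μ))) /
    Real.sqrt ((2 * Real.pi) ^ Fintype.card ι * V.det)

/-- The multivariate complementary Gaussian CDF
`Q_k(a; μ; V) = ∫_{a_1}^∞ ⋯ ∫_{a_k}^∞ N(x; μ, V) dx`. -/
def Qcdf {ι : Type*} [Fintype ι] [DecidableEq ι] (a μ : ι → ℝ) (V : Matrix ι ι ℝ) : ℝ :=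
  ∫ x in {x : ι → ℝ | ∀ i, a i ≤ x i}, gaussDensity μ V x

/-- The false reject exponent function `LD_B(λ, P_N, P_B)`. -/
def LD {X : Type*} [Fintype X] {M : ℕ} (T : ℕ) (B : Finset (Fin M)) (lam : ℝ) (PN : X → ℝ)
    (PA : ℕ → X → ℝ) : ℝ :=
  sInf {r | ∃ C ∈ SS M T, ∃ D ∈ SS M T, C ≠ D ∧ ∃ Q : Fin M → X → ℝ,
    (∀ i, IsProbDist (Q i)) ∧ Gfun C Q ≤ lam ∧ Gfun D Q ≤ lam ∧
    r = (∑ i ∈ B, KL (Q i) (PA (jmap B i))) + ∑ i ∈ Bᶜ, KL (Q i) PN}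

open Classical in
/-- `L*(ε)`: the largest `L` such that the `d(B)`-variate complementary Gaussian CDF,
restricted to the indices minimizing `GD(B, C_i, P_N, P_B)`, evaluated at `L·1` is `≥ 1 − ε`. -/
def Lstar {X : Type*} [Fintype X] {M k : ℕ} (T : ℕ) (eps : ℝ) (B : Finset (Fin M))
    (enum : Fin k → Finset (Fin M)) (PN : X → ℝ) (PA : ℕ → X → ℝ) : ℝ :=
  sSup {L : ℝ |
    1 - eps ≤ Qcdf (fun _ : {i : Fin k // GD B (enum i) PN PA = GDmin T B PN PA} => L)
      (fun _ => 0) ((Vmat B enum PN PA).submatrix Subtype.val Subtype.val)}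

/-- The mixture `P_mix^{t,l}(M) = (l·P_A + (M − t − l)·P_N)/(M − t)` (real parameters). -/
def pmixR {X : Type*} (PN PA0 : X → ℝ) (t l M : ℝ) (x : X) : ℝ :=
  (l * PA0 x + (M - t - l) * PN x) / (M - t)

/-- `f(M) = l·D(P_A ‖ P_mix^{t,l}(M)) + (M − t − l)·D(P_N ‖ P_mix^{t,l}(M))`. -/
def fGD {X : Type*} [Fintype X] (PN PA0 : X → ℝ) (t l M : ℝ) : ℝ :=
  l * KL PA0 (pmixR PN PA0 t l M) + (M - t - l) * KL PN (pmixR PN PA0 t l M)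

/-- `GD(B, P_N, P_B)` in the common-anomalous-distribution case, via the formula
`min_{t ∈ [T]} min_{l ∈ [|B|]} ( l·D(P_A‖P_mix^{t,l}) + (M−t−l)·D(P_N‖P_mix^{t,l}) )`,
as a function of the number of sequences `M` (with `T = ⌈M/2 − 1⌉` and `b = |B|`). -/
def gGD {X : Type*} [Fintype X] (b M : ℕ) (PN PA0 : X → ℝ) : ℝ :=
  sInf {r | ∃ t ∈ Finset.Icc 1 ((M - 1) / 2), ∃ l ∈ Finset.Icc 1 b,
    r = (l : ℝ) * KL PA0 (pmixR PN PA0 t l M) + ((M : ℝ) - t - l) * KL PN (pmixR PN PA0 t l M)}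

end

lemma term_hasDerivAt (a p t l M : ℝ) (ha : 0 ≤ a) (hp : 0 ≤ p)
    (hiff : a = 0 ↔ p = 0) (hl : 0 < l) (hM : t + l < M) :
    HasDerivAt (fun M' => l * (a * Real.log (a / ((l * a + (M' - t - l) * p) / (M' - t)))) +
      (M' - t - l) * (p * Real.log (p / ((l * a + (M' - t - l) * p) / (M' - t)))))
      (p * Real.log (p / ((l * a + (M - t - l) * p) / (M - t))) +
        ((l * a + (M - t - l) * p) / (M - t) - p)) M := by
  rcases eq_or_lt_of_le hp with hp0 | hp
  · -- p = 0, hence a = 0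
    have ha0 : a = 0 := hiff.mpr hp0.symm
    simp only [ha0, ← hp0, mul_zero, zero_mul, add_zero, zero_add, zero_div, sub_zero]
    exact hasDerivAt_const M 0
  · have ha : 0 < a := lt_of_le_of_ne ha (fun h => hp.ne' (hiff.mp h.symm))
    -- p > 0, a > 0
    have hs : (0:ℝ) < M - t := by linarith
    have hu : (0:ℝ) < l * a + (M - t - l) * p := by nlinarith
    -- derivative of the rewritten function
    have hdu : HasDerivAt (fun M' => l * a + (M' - t - l) * p) p M := by
      have h1 := ((((hasDerivAt_id M).sub_const t).sub_const l).mul_const p).const_add (l * a)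
      simpa using h1
    have hds : HasDerivAt (fun M' => M' - t) 1 M := (hasDerivAt_id M).sub_const t
    have hlogu : HasDerivAt (fun M' => Real.log (l * a + (M' - t - l) * p))
        (p / (l * a + (M - t - l) * p)) M := hdu.log hu.ne'
    have hlogs : HasDerivAt (fun M' => Real.log (M' - t)) (1 / (M - t)) M := by
      simpa using hds.log hs.ne'
    have hc2 : HasDerivAt (fun M' => (M' - t - l) * (p * Real.log p)) (p * Real.log p) M := by
      have := (((hasDerivAt_id M).sub_const t).sub_const l).mul_const (p * Real.log p)
      simpa using this
    have hh := (((hasDerivAt_const M (l * a * Real.log a)).add hc2).sub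
        (hdu.mul hlogu)).add (hdu.mul hlogs)
    have heq : (fun M' => l * (a * Real.log (a / ((l * a + (M' - t - l) * p) / (M' - t)))) +
        (M' - t - l) * (p * Real.log (p / ((l * a + (M' - t - l) * p) / (M' - t)))))
        =ᶠ[nhds M] (fun M' => (l * a * Real.log a + (M' - t - l) * (p * Real.log p) -
          (l * a + (M' - t - l) * p) * Real.log (l * a + (M' - t - l) * p)) +
          (l * a + (M' - t - l) * p) * Real.log (M' - t)) := by
      filter_upwards [Ioi_mem_nhds hM] with M' hM'
      have hs' : (0:ℝ) < M' - t := by simp only [Set.mem_Ioi] at hM'; linarith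
      have hu' : (0:ℝ) < l * a + (M' - t - l) * p := by
        simp only [Set.mem_Ioi] at hM'; nlinarith
      have hQ' : (0:ℝ) < (l * a + (M' - t - l) * p) / (M' - t) := div_pos hu' hs'
      rw [Real.log_div ha.ne' hQ'.ne', Real.log_div hp.ne' hQ'.ne',
        Real.log_div hu'.ne' hs'.ne']
      ring
    have hQ : (0:ℝ) < (l * a + (M - t - l) * p) / (M - t) := div_pos hu hs
    have := hh.congr_of_eventuallyEq heq
    refine this.congr_deriv ?_
    rw [Real.log_div hp.ne' hQ.ne', Real.log_div hu.ne' hs.ne']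
    have hc : (l * a + (M - t - l) * p) * (p / (l * a + (M - t - l) * p)) = p := by
      rw [mul_div_assoc', mul_div_cancel_left₀ p hu.ne']
    rw [hc]
    field_simp
    ring

/-- Fix `P_N ≠ P_A` with common support and integers `t, l ≥ 1`. Viewing `M`
as a real variable with `M > t + l`, the function
`f(M) = l·D(P_A‖P_mix^{t,l}(M)) + (M−t−l)·D(P_N‖P_mix^{t,l}(M))` is differentiable with
derivative `f'(M) = D(P_N‖P_mix^{t,l}(M))`; in particular `f` is strictly increasing whenever
`D(P_N‖P_mix^{t,l}(M)) > 0`. -/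
theorem fGD_hasDerivAt_and_strictMono
    {X : Type*} [Fintype X] (PN PA0 : X → ℝ) (hPN : IsProbDist PN) (hPA : IsProbDist PA0)
    (hsupp : ∀ x, PA0 x = 0 ↔ PN x = 0) (hne : PA0 ≠ PN)
    (t l : ℕ) (ht : 1 ≤ t) (hl : 1 ≤ l) :
    (∀ M : ℝ, ((t : ℝ) + l) < M →
      HasDerivAt (fun M' => fGD PN PA0 t l M') (KL PN (pmixR PN PA0 t l M)) M) ∧
    ((∀ M ∈ Set.Ioi ((t : ℝ) + l), 0 < KL PN (pmixR PN PA0 t l M)) →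
      StrictMonoOn (fun M' => fGD PN PA0 t l M') (Set.Ioi ((t : ℝ) + l))) := by
  have hl' : (0:ℝ) < l := by exact_mod_cast hl
  have hderiv : ∀ M : ℝ, ((t : ℝ) + l) < M →
      HasDerivAt (fun M' => fGD PN PA0 t l M') (KL PN (pmixR PN PA0 t l M)) M := by
    intro M hM
    have hs : (0:ℝ) < M - t := by linarith
    have key : HasDerivAt
        (fun M' => ∑ x, (l * (PA0 x * Real.log (PA0 x /
            ((l * PA0 x + (M' - t - l) * PN x) / (M' - t)))) +
          (M' - t - l) * (PN x * Real.log (PN x /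
            ((l * PA0 x + (M' - t - l) * PN x) / (M' - t))))))
        (∑ x, (PN x * Real.log (PN x / ((l * PA0 x + (M - t - l) * PN x) / (M - t))) +
          ((l * PA0 x + (M - t - l) * PN x) / (M - t) - PN x))) M :=
      HasDerivAt.fun_sum fun x _ =>
        term_hasDerivAt (PA0 x) (PN x) t l M (hPA.1 x) (hPN.1 x) (hsupp x) hl' hM
    have hfun : (fun M' => fGD PN PA0 t l M') =
        (fun M' => ∑ x, (l * (PA0 x * Real.log (PA0 x /
            ((l * PA0 x + (M' - t - l) * PN x) / (M' - t)))) +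
          (M' - t - l) * (PN x * Real.log (PN x /
            ((l * PA0 x + (M' - t - l) * PN x) / (M' - t)))))) := by
      funext M'
      simp only [fGD, KL, pmixR, Finset.mul_sum, ← Finset.sum_add_distrib]
    have hd : (∑ x, (PN x * Real.log (PN x / ((l * PA0 x + (M - t - l) * PN x) / (M - t))) +
          ((l * PA0 x + (M - t - l) * PN x) / (M - t) - PN x)))
        = KL PN (pmixR PN PA0 t l M) := by
      rw [Finset.sum_add_distrib]
      have h1 : ∑ x, ((l * PA0 x + (M - t - l) * PN x) / (M - t) - PN x) = 0 := by
        rw [Finset.sum_sub_distrib, ← Finset.sum_div, Finset.sum_add_distrib,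
          ← Finset.mul_sum, ← Finset.mul_sum, hPN.2, hPA.2]
        field_simp
        ring
      rw [h1, add_zero]
      simp only [KL, pmixR]
    rw [hfun, ← hd]
    exact key
  refine ⟨hderiv, fun hpos => ?_⟩
  apply strictMonoOn_of_deriv_pos (convex_Ioi _)
  · exact fun x hx => ((hderiv x hx).differentiableAt.continuousAt).continuousWithinAt
  · intro x hx
    rw [interior_Ioi] at hx
    rw [(hderiv x hx).deriv]
    exact hpos x hx
end

section
/- Fix B ∈ S and distributions (P_N, P_B) on the finite alphabet X with common support and P_{A,j} ≠ P_N for all j ∈ [|B|]. If the threshold λ of the test Ψ_n satisfies 0 < λ < GD(B, P_N, P_B), then the false reject probability vanishes: lim_{n→∞} ζ_B(Ψ_n | P_N, P_T) = 0. Conversely, if λ > GD(B, P_N, P_B), then lim_{n→∞} ζ_B(Ψ_n | P_N, P_T) = 1. -/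
open Finset MeasureTheory Filter

namespace PT
variable {X : Type*} [Fintype X] [DecidableEq X]

lemma sum_pi_prod {ι : Type*} [Fintype ι] [DecidableEq ι] {α : ι → Type*} [∀ i, Fintype (α i)]
    (f : ∀ i, α i → ℝ) :
    ∑ g : ∀ i, α i, ∏ i, f i (g i) = ∏ i, ∑ x, f i x := by
  rw [Finset.prod_univ_sum, Fintype.piFinset_univ]

variable {n : ℕ} {p₀ : X → ℝ}

lemma mgen (h1 : ∑ x, p₀ x = 1) (a : X) (s : Finset (Fin n)) :
    ∑ y : Fin n → X, (∏ k, p₀ (y k)) * ∏ k ∈ s, (if y k = a then (1:ℝ) else 0)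
      = p₀ a ^ s.card := by
  have h2 : ∀ y : Fin n → X,
      (∏ k, p₀ (y k)) * ∏ k ∈ s, (if y k = a then (1:ℝ) else 0)
        = ∏ k, (p₀ (y k) * if k ∈ s then (if y k = a then (1:ℝ) else 0) else 1) := by
    intro y
    rw [Finset.prod_mul_distrib, Finset.prod_ite_mem, univ_inter]
  rw [Finset.sum_congr rfl fun y _ => h2 y]
  refine (sum_pi_prod
    (fun k (x : X) => p₀ x * if k ∈ s then (if x = a then (1:ℝ) else 0) else 1)).trans ?_
  have h3 : ∀ k : Fin n, ∑ x, (p₀ x * if k ∈ s then (if x = a then (1:ℝ) else 0) else 1)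
      = if k ∈ s then p₀ a else 1 := by
    intro k
    by_cases hk : k ∈ s <;> simp [hk, mul_ite, Finset.sum_ite_eq', h1]
  rw [Finset.prod_congr rfl fun k _ => h3 k, Finset.prod_ite_mem, univ_inter, Finset.prod_const]

lemma m0 (h1 : ∑ x, p₀ x = 1) :
    ∑ y : Fin n → X, (∏ k, p₀ (y k)) = 1 := by
  refine (sum_pi_prod (fun _ (x : X) => p₀ x)).trans ?_
  simp [h1]

/-- the count statistic as a real sum of indicators -/
lemma Sc_eq (a : X) (y : Fin n → X) :
    (((Finset.univ.filter fun k => y k = a).card : ℕ) : ℝ)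
      = ∑ k, (if y k = a then (1:ℝ) else 0) := by
  rw [Finset.card_filter]
  push_cast
  exact Finset.sum_congr rfl fun k _ => by split <;> norm_num

lemma m1 (h1 : ∑ x, p₀ x = 1) (a : X) :
    ∑ y : Fin n → X, (∏ k, p₀ (y k)) * (((Finset.univ.filter fun k => y k = a).card : ℕ) : ℝ)
      = n * p₀ a := by
  have : ∀ y : Fin n → X, (∏ k, p₀ (y k)) * (((Finset.univ.filter fun k => y k = a).card : ℕ) : ℝ)
      = ∑ k, (∏ k', p₀ (y k')) * ∏ k' ∈ ({k} : Finset (Fin n)), (if y k' = a then (1:ℝ) else 0) := by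
    intro y
    simp only [Finset.prod_singleton]
    rw [Sc_eq, Finset.mul_sum]
  rw [Finset.sum_congr rfl fun y _ => this y, Finset.sum_comm]
  rw [Finset.sum_congr rfl fun k _ => mgen h1 a {k}]
  simp

lemma m2 (h1 : ∑ x, p₀ x = 1) (a : X) :
    ∑ y : Fin n → X, (∏ k, p₀ (y k)) * (((Finset.univ.filter fun k => y k = a).card : ℕ) : ℝ)^2
      = n * p₀ a + ((n:ℝ)^2 - n) * p₀ a ^ 2 := by
  have key : ∀ y : Fin n → X,
      (∏ k, p₀ (y k)) * (((Finset.univ.filter fun k => y k = a).card : ℕ) : ℝ)^2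
      = ∑ k, ∑ l, (∏ k', p₀ (y k')) *
          ((if y k = a then (1:ℝ) else 0) * (if y l = a then (1:ℝ) else 0)) := by
    intro y
    rw [Sc_eq, sq, Finset.sum_mul_sum]
    rw [Finset.mul_sum]
    refine Finset.sum_congr rfl fun k _ => ?_
    rw [Finset.mul_sum]
  rw [Finset.sum_congr rfl fun y _ => key y]
  rw [Finset.sum_comm]
  have inner : ∀ k l : Fin n,
      ∑ y : Fin n → X, (∏ k', p₀ (y k')) *
          ((if y k = a then (1:ℝ) else 0) * (if y l = a then (1:ℝ) else 0))
      = if k = l then p₀ a else p₀ a ^ 2 := by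
    intro k l
    by_cases hkl : k = l
    · subst hkl
      rw [if_pos rfl]
      have : ∀ y : Fin n → X,
          (∏ k', p₀ (y k')) * ((if y k = a then (1:ℝ) else 0) * (if y k = a then (1:ℝ) else 0))
          = (∏ k', p₀ (y k')) * ∏ k' ∈ ({k} : Finset (Fin n)), (if y k' = a then (1:ℝ) else 0) := by
        intro y; by_cases h : y k = a <;> simp [h]
      rw [Finset.sum_congr rfl fun y _ => this y, mgen h1 a {k}]
      simp
    · rw [if_neg hkl]
      have : ∀ y : Fin n → X,
          (∏ k', p₀ (y k')) * ((if y k = a then (1:ℝ) else 0) * (if y l = a then (1:ℝ) else 0))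
          = (∏ k', p₀ (y k')) * ∏ k' ∈ ({k, l} : Finset (Fin n)), (if y k' = a then (1:ℝ) else 0) := by
        intro y; rw [Finset.prod_pair hkl]
      rw [Finset.sum_congr rfl fun y _ => this y, mgen h1 a {k, l}, Finset.card_pair hkl]
  rw [Finset.sum_congr rfl fun k (_ : k ∈ Finset.univ) => Finset.sum_comm]
  rw [Finset.sum_congr rfl fun k _ => Finset.sum_congr rfl fun l _ => inner k l]
  have hrow : ∀ k : Fin n, ∑ l, (if k = l then p₀ a else p₀ a ^ 2)
      = (n:ℝ) * p₀ a ^ 2 + (p₀ a - p₀ a ^ 2) := by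
    intro k
    have : ∀ l : Fin n, (if k = l then p₀ a else p₀ a ^ 2)
        = p₀ a ^ 2 + (if k = l then p₀ a - p₀ a ^ 2 else 0) := by
      intro l; by_cases h : k = l <;> simp [h]
    rw [Finset.sum_congr rfl fun l _ => this l, Finset.sum_add_distrib,
      Finset.sum_ite_eq, Finset.sum_const]
    simp [mul_comm]
  rw [Finset.sum_congr rfl fun k _ => hrow k, Finset.sum_const]
  simp only [Finset.card_univ, Fintype.card_fin, nsmul_eq_mul]
  ring

end PT

namespace PT
variable {X : Type*} [Fintype X] [DecidableEq X] {n : ℕ} {p₀ : X → ℝ}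
set_option linter.unusedSectionVars false

lemma var_le (h0 : ∀ x, 0 ≤ p₀ x) (h1 : ∑ x, p₀ x = 1) (a : X) :
    ∑ y : Fin n → X, (∏ k, p₀ (y k)) *
      ((((Finset.univ.filter fun k => y k = a).card : ℕ) : ℝ) - n * p₀ a)^2 ≤ n := by
  have expand : ∀ y : Fin n → X, (∏ k, p₀ (y k)) *
      ((((Finset.univ.filter fun k => y k = a).card : ℕ) : ℝ) - n * p₀ a)^2
      = (∏ k, p₀ (y k)) * (((Finset.univ.filter fun k => y k = a).card : ℕ) : ℝ)^2
        - (2 * ((n:ℝ) * p₀ a)) * ((∏ k, p₀ (y k)) * (((Finset.univ.filter fun k => y k = a).card : ℕ) : ℝ))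
        + ((n:ℝ) * p₀ a)^2 * (∏ k, p₀ (y k)) := by
    intro y; ring
  rw [Finset.sum_congr rfl fun y _ => expand y]
  rw [Finset.sum_add_distrib, Finset.sum_sub_distrib, ← Finset.mul_sum, ← Finset.mul_sum]
  rw [m1 h1 a, m2 h1 a, m0 h1]
  have hple : p₀ a ≤ 1 := by
    calc p₀ a ≤ ∑ x, p₀ x := Finset.single_le_sum (fun x _ => h0 x) (Finset.mem_univ a)
    _ = 1 := h1
  have h0a := h0 a
  nlinarith [sq_nonneg (p₀ a), Nat.cast_nonneg (α := ℝ) n]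

lemma cheb1 (h0 : ∀ x, 0 ≤ p₀ x) (h1 : ∑ x, p₀ x = 1) (a : X) (c : ℝ) (hn : 0 < n) {δ : ℝ}
    (hδ : 0 < δ) (hc : c = p₀ a) :
    ∑ y : Fin n → X,
      (if δ ≤ |(((Finset.univ.filter fun k => y k = a).card : ℕ) : ℝ) / n - c| then ∏ k, p₀ (y k) else 0)
      ≤ 1 / (n * δ^2) := by
  subst hc
  have hn' : (0:ℝ) < n := by exact_mod_cast hn
  have key : ∀ y : Fin n → X,
      (if δ ≤ |(((Finset.univ.filter fun k => y k = a).card : ℕ) : ℝ) / n - p₀ a| then ∏ k, p₀ (y k) else 0)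
      ≤ (∏ k, p₀ (y k)) *
        ((((Finset.univ.filter fun k => y k = a).card : ℕ) : ℝ) - n * p₀ a)^2 / ((n:ℝ)^2 * δ^2) := by
    intro y
    set S := (((Finset.univ.filter fun k => y k = a).card : ℕ) : ℝ) with hS
    have hW : 0 ≤ ∏ k, p₀ (y k) := Finset.prod_nonneg fun k _ => h0 (y k)
    by_cases hev : δ ≤ |S / n - p₀ a|
    · rw [if_pos hev]
      have h2 : (n:ℝ)^2 * δ^2 ≤ (S - n * p₀ a)^2 := by
        have : S - n * p₀ a = n * (S / n - p₀ a) := by field_simp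
        rw [this, mul_pow]
        have := abs_nonneg (S / n - p₀ a)
        have hsq : δ^2 ≤ (S / n - p₀ a)^2 := by
          calc δ^2 ≤ |S / n - p₀ a|^2 := pow_le_pow_left₀ hδ.le hev 2
            _ = (S / n - p₀ a)^2 := sq_abs _
        nlinarith
      rw [le_div_iff₀ (by positivity)]
      exact mul_le_mul_of_nonneg_left h2 hW
    · rw [if_neg hev]
      positivity
  calc ∑ y : Fin n → X,
      (if δ ≤ |(((Finset.univ.filter fun k => y k = a).card : ℕ) : ℝ) / n - p₀ a| then ∏ k, p₀ (y k) else 0)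
      ≤ ∑ y : Fin n → X, (∏ k, p₀ (y k)) *
        ((((Finset.univ.filter fun k => y k = a).card : ℕ) : ℝ) - n * p₀ a)^2 / ((n:ℝ)^2 * δ^2) :=
        Finset.sum_le_sum fun y _ => key y
    _ = (∑ y : Fin n → X, (∏ k, p₀ (y k)) *
        ((((Finset.univ.filter fun k => y k = a).card : ℕ) : ℝ) - n * p₀ a)^2) / ((n:ℝ)^2 * δ^2) := by
        rw [Finset.sum_div]
    _ ≤ (n:ℝ) / ((n:ℝ)^2 * δ^2) := by
        exact (div_le_div_iff_of_pos_right (by positivity)).mpr (var_le h0 h1 a)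
    _ = 1 / (n * δ^2) := by field_simp

end PT
set_option linter.unusedSectionVars false
set_option maxHeartbeats 1000000

namespace PT
open Finset
variable {X : Type*} [Fintype X] [DecidableEq X]


section prob
variable {M n : ℕ} {B : Finset (Fin M)} {PN : X → ℝ} {PA : ℕ → X → ℝ}

lemma probB_nonneg (hp0 : ∀ i x, 0 ≤ pdist B PN PA i x) (A : (Fin M → Fin n → X) → Prop) :
    0 ≤ probB n B PN PA A := by
  classical
  rw [probB]
  refine Finset.sum_nonneg fun xs _ => ?_
  split
  · exact Finset.prod_nonneg fun i _ => Finset.prod_nonneg fun k _ => hp0 i (xs i k)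
  · exact le_refl 0

lemma probB_congr {A A' : (Fin M → Fin n → X) → Prop} (h : ∀ xs, A xs ↔ A' xs) :
    probB n B PN PA A = probB n B PN PA A' := by
  classical
  rw [probB, probB]
  exact Finset.sum_congr rfl fun xs _ => if_congr (h xs) rfl rfl

lemma probB_mono (hp0 : ∀ i x, 0 ≤ pdist B PN PA i x) {A A' : (Fin M → Fin n → X) → Prop}
    (h : ∀ xs, (∏ i, ∏ k, pdist B PN PA i (xs i k)) ≠ 0 → A xs → A' xs) :
    probB n B PN PA A ≤ probB n B PN PA A' := by
  classical
  rw [probB, probB]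
  refine Finset.sum_le_sum fun xs _ => ?_
  have hw : 0 ≤ ∏ i, ∏ k, pdist B PN PA i (xs i k) :=
    Finset.prod_nonneg fun i _ => Finset.prod_nonneg fun k _ => hp0 i (xs i k)
  by_cases hA : A xs
  · rw [if_pos hA]
    rcases eq_or_ne (∏ i, ∏ k, pdist B PN PA i (xs i k)) 0 with hz | hz
    · rw [hz]; split <;> simp [hz]
    · rw [if_pos (h xs hz hA)]
  · rw [if_neg hA]; split
    · exact hw
    · exact le_refl 0

lemma probB_total (hp1 : ∀ i, ∑ x, pdist B PN PA i x = 1) (A : (Fin M → Fin n → X) → Prop) :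
    probB n B PN PA A + probB n B PN PA (fun xs => ¬ A xs) = 1 := by
  classical
  rw [probB, probB, ← Finset.sum_add_distrib]
  refine ((Finset.sum_congr rfl fun xs _ => ?_).trans
    (sum_pi_prod (fun i (y : Fin n → X) => ∏ k, pdist B PN PA i (y k)))).trans ?_
  · by_cases hA : A xs <;> simp [hA]
  have h2 : ∀ i : Fin M, ∑ y : Fin n → X, ∏ k, pdist B PN PA i (y k) = 1 := by
    intro i
    refine (sum_pi_prod (fun _ (x : X) => pdist B PN PA i x)).trans ?_
    simp [hp1 i]
  rw [Finset.prod_congr rfl fun i _ => h2 i, Finset.prod_const_one]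

lemma probB_le_one (hp0 : ∀ i x, 0 ≤ pdist B PN PA i x)
    (hp1 : ∀ i, ∑ x, pdist B PN PA i x = 1) (A : (Fin M → Fin n → X) → Prop) :
    probB n B PN PA A ≤ 1 := by
  have := probB_total hp1 A
  have := probB_nonneg hp0 (fun xs => ¬ A xs)
  linarith

lemma probB_union {J : Type*} (hp0 : ∀ i x, 0 ≤ pdist B PN PA i x) (s : Finset J)
    (A : J → (Fin M → Fin n → X) → Prop) :
    probB n B PN PA (fun xs => ∃ j ∈ s, A j xs) ≤ ∑ j ∈ s, probB n B PN PA (A j) := by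
  classical
  simp only [probB]
  rw [Finset.sum_comm]
  refine Finset.sum_le_sum fun xs _ => ?_
  have hw : 0 ≤ ∏ i, ∏ k, pdist B PN PA i (xs i k) :=
    Finset.prod_nonneg fun i _ => Finset.prod_nonneg fun k _ => hp0 i (xs i k)
  by_cases hA : ∃ j ∈ s, A j xs
  · rw [if_pos hA]
    obtain ⟨j, hj, hAj⟩ := hA
    calc (∏ i, ∏ k, pdist B PN PA i (xs i k))
        = (if A j xs then ∏ i, ∏ k, pdist B PN PA i (xs i k) else 0) := by rw [if_pos hAj]
      _ ≤ ∑ j ∈ s, (if A j xs then ∏ i, ∏ k, pdist B PN PA i (xs i k) else 0) :=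
          Finset.single_le_sum (f := fun j => if A j xs then ∏ i, ∏ k, pdist B PN PA i (xs i k) else 0)
            (fun j _ => by split_ifs; exacts [hw, le_rfl]) hj
  · rw [if_neg hA]
    exact Finset.sum_nonneg fun j _ => by split_ifs; exacts [hw, le_rfl]

open Classical in
lemma probB_marg (hp1 : ∀ i, ∑ x, pdist B PN PA i x = 1) (i₀ : Fin M)
    (A : (Fin n → X) → Prop) :
    probB n B PN PA (fun xs => A (xs i₀))
      = ∑ y : Fin n → X, if A y then ∏ k, pdist B PN PA i₀ (y k) else 0 := by
  classical
  rw [probB]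
  have h1 : ∀ xs : Fin M → Fin n → X,
      (if A (xs i₀) then ∏ i, ∏ k, pdist B PN PA i (xs i k) else 0)
      = ∏ i, (if i = i₀ then (if A (xs i) then ∏ k, pdist B PN PA i (xs i k) else 0)
          else ∏ k, pdist B PN PA i (xs i k)) := by
    intro xs
    by_cases hA : A (xs i₀)
    · rw [if_pos hA]
      refine Finset.prod_congr rfl fun i _ => ?_
      by_cases hi : i = i₀
      · subst hi; rw [if_pos rfl, if_pos hA]
      · rw [if_neg hi]
    · rw [if_neg hA]
      refine (Finset.prod_eq_zero (Finset.mem_univ i₀) ?_).symm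
      rw [if_pos rfl, if_neg hA]
  rw [Finset.sum_congr rfl fun xs _ => h1 xs]
  refine (sum_pi_prod (fun i (y : Fin n → X) =>
      if i = i₀ then (if A y then ∏ k, pdist B PN PA i (y k) else 0)
        else ∏ k, pdist B PN PA i (y k))).trans ?_
  have h2 : ∀ i : Fin M, (∑ y : Fin n → X,
      (if i = i₀ then (if A y then ∏ k, pdist B PN PA i (y k) else 0)
        else ∏ k, pdist B PN PA i (y k)))
      = if i = i₀ then (∑ y : Fin n → X, if A y then ∏ k, pdist B PN PA i₀ (y k) else 0) else 1 := by
    intro i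
    by_cases hi : i = i₀
    · subst hi
      rw [if_pos rfl]
      exact Finset.sum_congr rfl fun y _ => by rw [if_pos rfl]
    · rw [if_neg hi]
      simp only [if_neg hi]
      refine (sum_pi_prod (fun _ (x : X) => pdist B PN PA i x)).trans ?_
      simp [hp1 i]
  rw [Finset.prod_congr rfl fun i _ => h2 i, Finset.prod_ite_eq' Finset.univ i₀]
  simp

end prob
end PT

namespace PT
open Finset
variable {X : Type*} [Fintype X] [DecidableEq X]
section struct
variable {M T : ℕ} {B : Finset (Fin M)} {PN : X → ℝ} {PA : ℕ → X → ℝ}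

lemma mem_SS {C : Finset (Fin M)} : C ∈ SS M T ↔ C.Nonempty ∧ C.card ≤ T := by
  simp [SS]

lemma jmap_mem {i : Fin M} (hiB : i ∈ B) (hBT : B.card ≤ T) :
    jmap B i ∈ Finset.Icc 1 T := by
  rw [Finset.mem_Icc, jmap]
  constructor
  · rw [Nat.one_le_iff_ne_zero, ← Nat.pos_iff_ne_zero, Finset.card_pos]
    exact ⟨i, Finset.mem_filter.mpr ⟨hiB, le_refl i⟩⟩
  · exact le_trans (Finset.card_filter_le _ _) hBT

lemma pdist_nonneg (hP : ValidTuple T PN PA) (hBT : B.card ≤ T) (i : Fin M) (x : X) :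
    0 ≤ pdist B PN PA i x := by
  rw [pdist]
  split_ifs with h
  · exact (hP.2.1 _ (jmap_mem h hBT)).1 x
  · exact hP.1.1 x

lemma pdist_sum (hP : ValidTuple T PN PA) (hBT : B.card ≤ T) (i : Fin M) :
    ∑ x, pdist B PN PA i x = 1 := by
  rw [pdist]
  split_ifs with h
  · exact (hP.2.1 _ (jmap_mem h hBT)).2
  · exact hP.1.2

lemma pdist_zero (hP : ValidTuple T PN PA) (hBT : B.card ≤ T) (i : Fin M) {x : X}
    (hx : PN x = 0) : pdist B PN PA i x = 0 := by
  rw [pdist]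
  split_ifs with h
  · exact ((hP.2.2.1 _ (jmap_mem h hBT)) x).mpr hx
  · exact hx

lemma pdist_pos (hP : ValidTuple T PN PA) (hBT : B.card ≤ T) (i : Fin M) {x : X}
    (hx : PN x ≠ 0) : 0 < pdist B PN PA i x := by
  rcases (pdist_nonneg hP hBT i x).lt_or_eq with h | h
  · exact h
  · exfalso
    apply hx
    rw [pdist] at h
    split_ifs at h with hiB
    · exact ((hP.2.2.1 _ (jmap_mem hiB hBT)) x).mp h.symm
    · exact h.symm

lemma KL_self (P : X → ℝ) : KL P P = 0 := by
  rw [KL]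
  refine Finset.sum_eq_zero fun x _ => ?_
  rcases eq_or_ne (P x) 0 with h | h
  · rw [h]; ring
  · rw [div_self h, Real.log_one, mul_zero]

lemma sum_pdist_compl (C : Finset (Fin M)) (x : X) :
    ∑ l ∈ Cᶜ, pdist B PN PA l x
      = (∑ i ∈ B \ C, PA (jmap B i) x) + ∑ _i ∈ Bᶜ \ C, PN x := by
  rw [← Finset.sum_filter_add_sum_filter_not Cᶜ (· ∈ B)]
  congr 1
  · refine Finset.sum_congr ?_ fun l hl => ?_
    · ext l; simp [Finset.mem_sdiff, and_comm]
    · rw [pdist, if_pos (Finset.mem_sdiff.mp hl).1]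
  · refine Finset.sum_congr ?_ fun l hl => ?_
    · ext l; simp [Finset.mem_sdiff, and_comm]
    · rw [pdist, if_neg (Finset.mem_compl.mp (Finset.mem_sdiff.mp hl).1)]

lemma gfun_pdist (C : Finset (Fin M)) :
    Gfun C (pdist B PN PA) = GD B C PN PA := by
  rw [Gfun, GD]
  have hmix : (fun x => (∑ l ∈ Cᶜ, pdist B PN PA l x) / ((M:ℝ) - C.card)) = Pmix B C PN PA := by
    funext x; rw [Pmix, sum_pdist_compl]
  rw [hmix, ← Finset.sum_filter_add_sum_filter_not Cᶜ (· ∈ B)]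
  congr 1
  · refine Finset.sum_congr ?_ fun l hl => ?_
    · ext l; simp [Finset.mem_sdiff, and_comm]
    · rw [pdist, if_pos (Finset.mem_sdiff.mp hl).1]
  · refine Finset.sum_congr ?_ fun l hl => ?_
    · ext l; simp [Finset.mem_sdiff, and_comm]
    · rw [pdist, if_neg (Finset.mem_compl.mp (Finset.mem_sdiff.mp hl).1)]

lemma GD_self (hcard : B.card < M) : GD B B PN PA = 0 := by
  have hm : Pmix B B PN PA = PN := by
    funext x
    rw [Pmix, Finset.sdiff_self]
    have : (Bᶜ \ B : Finset (Fin M)) = Bᶜ := by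
      ext i; simp [Finset.mem_sdiff, Finset.mem_compl]
    rw [this, Finset.sum_empty, Finset.sum_const, Finset.card_compl, Fintype.card_fin,
      nsmul_eq_mul, Nat.cast_sub hcard.le, zero_add]
    have hne : (M:ℝ) - B.card ≠ 0 := by
      have : (B.card : ℝ) < M := by exact_mod_cast hcard
      linarith
    field_simp
  rw [GD, hm, Finset.sdiff_self, Finset.sum_empty, zero_add]
  exact Finset.sum_eq_zero fun i _ => KL_self PN

end struct
end PT

namespace PT
open Finset
variable {X : Type*} [Fintype X] [DecidableEq X]
section dev
variable {M T n : ℕ} {B : Finset (Fin M)} {PN : X → ℝ} {PA : ℕ → X → ℝ}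

lemma probB_dev (hP : ValidTuple T PN PA) (hBT : B.card ≤ T) (i₀ : Fin M) (a : X)
    (hn : 0 < n) {δ : ℝ} (hδ : 0 < δ) :
    probB n B PN PA (fun xs => δ ≤ |emp (xs i₀) a - pdist B PN PA i₀ a|)
      ≤ 1 / (n * δ^2) := by
  rw [probB_marg (pdist_sum hP hBT) i₀ (fun y => δ ≤ |emp y a - pdist B PN PA i₀ a|)]
  have := cheb1 (p₀ := pdist B PN PA i₀) (fun x => pdist_nonneg hP hBT i₀ x)
    (pdist_sum hP hBT i₀) a (pdist B PN PA i₀ a) hn hδ rfl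
  refine le_trans (le_of_eq ?_) this
  refine Finset.sum_congr rfl fun y _ => ?_
  rw [emp]

lemma probB_bad (hP : ValidTuple T PN PA) (hBT : B.card ≤ T) (hn : 0 < n) {δ : ℝ} (hδ : 0 < δ) :
    probB n B PN PA (fun xs => ¬ ∀ i a, |emp (xs i) a - pdist B PN PA i a| < δ)
      ≤ ((M * Fintype.card X : ℕ) / δ^2) / n := by
  have h0 := pdist_nonneg hP hBT
  have hiff : ∀ xs : Fin M → Fin n → X,
      (¬ ∀ i a, |emp (xs i) a - pdist B PN PA i a| < δ)
        ↔ ∃ z ∈ (Finset.univ : Finset (Fin M × X)), δ ≤ |emp (xs z.1) z.2 - pdist B PN PA z.1 z.2| := by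
    intro xs
    push_neg
    constructor
    · rintro ⟨i, a, h⟩; exact ⟨(i, a), Finset.mem_univ _, h⟩
    · rintro ⟨z, _, h⟩; exact ⟨z.1, z.2, h⟩
  rw [probB_congr hiff]
  calc probB n B PN PA (fun xs => ∃ z ∈ (Finset.univ : Finset (Fin M × X)),
        δ ≤ |emp (xs z.1) z.2 - pdist B PN PA z.1 z.2|)
      ≤ ∑ z : Fin M × X, probB n B PN PA (fun xs => δ ≤ |emp (xs z.1) z.2 - pdist B PN PA z.1 z.2|) :=
        probB_union h0 Finset.univ _
    _ ≤ ∑ _z : Fin M × X, 1 / (n * δ^2) :=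
        Finset.sum_le_sum fun z _ => probB_dev hP hBT z.1 z.2 hn hδ
    _ = ((M * Fintype.card X : ℕ) / δ^2) / n := by
        rw [Finset.sum_const, Finset.card_univ, Fintype.card_prod, Fintype.card_fin,
          nsmul_eq_mul]
        have hn' : (0:ℝ) < n := by exact_mod_cast hn
        field_simp
        try ring
        try exact Or.inl trivial

end dev
end PT

namespace PT
open Finset
variable {X : Type*} [Fintype X] [DecidableEq X]
section cont
variable {M T : ℕ} {B : Finset (Fin M)} {PN : X → ℝ} {PA : ℕ → X → ℝ}

lemma card_lt_of_mem_SS (hT : T < M) {C : Finset (Fin M)} (hC : C ∈ SS M T) : C.card < M :=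
  lt_of_le_of_lt (mem_SS.mp hC).2 hT

lemma gfun_continuousWithinAt (hP : ValidTuple T PN PA) (hBT : B.card ≤ T) (hTM : T < M)
    (C : Finset (Fin M)) (hC : C ∈ SS M T) :
    ContinuousWithinAt (fun Q => Gfun C Q)
      {Q : Fin M → X → ℝ | ∀ i x, PN x = 0 → Q i x = 0} (pdist B PN PA) := by
  have hcard : C.card < M := card_lt_of_mem_SS hTM hC
  have hcne : (Cᶜ : Finset (Fin M)).Nonempty := by
    rw [← Finset.card_pos, Finset.card_compl, Fintype.card_fin]
    omega
  have hden : (0:ℝ) < (M:ℝ) - C.card := by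
    have : (C.card : ℝ) < M := by exact_mod_cast hcard
    linarith
  set p := pdist B PN PA with hp
  set G' : (Fin M → X → ℝ) → ℝ := fun Q =>
    ∑ t ∈ Cᶜ, ∑ x ∈ Finset.univ.filter (fun x => PN x ≠ 0),
      Q t x * Real.log (Q t x / ((∑ l ∈ Cᶜ, Q l x) / ((M:ℝ) - C.card))) with hG'
  have heq : ∀ Q ∈ {Q : Fin M → X → ℝ | ∀ i x, PN x = 0 → Q i x = 0},
      Gfun C Q = G' Q := by
    intro Q hQ
    rw [Gfun, hG']
    refine Finset.sum_congr rfl fun t _ => ?_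
    rw [KL]
    refine (Finset.sum_filter_of_ne fun x _ hne => ?_).symm
    intro hPN
    exact hne (by rw [hQ t x hPN, zero_mul])
  have hpmem : p ∈ {Q : Fin M → X → ℝ | ∀ i x, PN x = 0 → Q i x = 0} :=
    fun i x hx => pdist_zero hP hBT i hx
  have hGc : ContinuousAt G' p := by
    rw [hG', ContinuousAt]
    refine tendsto_finset_sum _ fun t _ => ?_
    refine tendsto_finset_sum _ fun x hx => ?_
    have hxne : PN x ≠ 0 := (Finset.mem_filter.mp hx).2
    have happ : ∀ (s : Fin M) (b : X), ContinuousAt (fun Q : Fin M → X → ℝ => Q s b) p :=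
      fun s b => ((continuous_apply b).comp (continuous_apply s)).continuousAt
    have hsum : ContinuousAt (fun Q : Fin M → X → ℝ => (∑ l ∈ Cᶜ, Q l x) / ((M:ℝ) - C.card)) p := by
      apply ContinuousAt.div_const
      rw [ContinuousAt]
      exact tendsto_finset_sum _ fun l _ => happ l x
    have hmixpos : 0 < (∑ l ∈ Cᶜ, p l x) / ((M:ℝ) - C.card) :=
      div_pos (Finset.sum_pos (fun l _ => pdist_pos hP hBT l hxne) hcne) hden
    have hratio : ContinuousAt
        (fun Q : Fin M → X → ℝ => Q t x / ((∑ l ∈ Cᶜ, Q l x) / ((M:ℝ) - C.card))) p :=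
      (happ t x).div hsum (ne_of_gt hmixpos)
    have hlog : ContinuousAt
        (fun Q : Fin M → X → ℝ => Real.log (Q t x / ((∑ l ∈ Cᶜ, Q l x) / ((M:ℝ) - C.card)))) p := by
      refine ContinuousAt.comp (Real.continuousAt_log ?_) hratio
      exact ne_of_gt (div_pos (pdist_pos hP hBT t hxne) hmixpos)
    exact (happ t x).mul hlog
  exact hGc.continuousWithinAt.congr heq (heq p hpmem)

lemma scores_close (hP : ValidTuple T PN PA) (hBT : B.card ≤ T) (hTM : T < M)
    {ε : ℝ} (hε : 0 < ε) :
    ∃ δ > 0, ∀ Q : Fin M → X → ℝ,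
      (∀ i x, PN x = 0 → Q i x = 0) →
      (∀ i x, |Q i x - pdist B PN PA i x| < δ) →
      ∀ C ∈ SS M T, |Gfun C Q - GD B C PN PA| < ε := by
  set p := pdist B PN PA with hp
  set D : Set (Fin M → X → ℝ) := {Q | ∀ i x, PN x = 0 → Q i x = 0} with hD
  set Φ : (Fin M → X → ℝ) → ℝ := fun Q => ∑ C ∈ SS M T, |Gfun C Q - GD B C PN PA| with hΦ
  have hΦp : Φ p = 0 := by
    rw [hΦ]
    refine Finset.sum_eq_zero fun C _ => ?_
    rw [gfun_pdist, sub_self, abs_zero]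
  have hΦcont : ContinuousWithinAt Φ D p := by
    rw [hΦ, ContinuousWithinAt]
    refine tendsto_finset_sum _ fun C hC => ?_
    exact ((gfun_continuousWithinAt hP hBT hTM C hC).sub_const _).abs
  obtain ⟨δ, hδ, hδ'⟩ := Metric.continuousWithinAt_iff.mp hΦcont ε hε
  refine ⟨δ, hδ, fun Q hQ0 hQδ C hC => ?_⟩
  have hdist : dist Q p < δ := by
    rw [dist_pi_lt_iff hδ]
    intro i
    rw [dist_pi_lt_iff hδ]
    intro x
    rw [Real.dist_eq]
    exact hQδ i x
  have hdf := hδ' hQ0 hdist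
  rw [Real.dist_eq, hΦp, sub_zero] at hdf
  calc |Gfun C Q - GD B C PN PA|
      ≤ Φ Q := Finset.single_le_sum (f := fun C => |Gfun C Q - GD B C PN PA|)
        (fun _ _ => abs_nonneg _) hC
    _ ≤ |Φ Q| := le_abs_self _
    _ < ε := hdf

end cont
end PT

namespace PT
open Finset
variable {X : Type*} [Fintype X] [DecidableEq X]
section dec
variable {M T n : ℕ} {B : Finset (Fin M)} {PN : X → ℝ} {PA : ℕ → X → ℝ} {lam : ℝ}

lemma exists_SS_ne (hM : 3 ≤ M) (hT1 : 1 ≤ T) (B' : Finset (Fin M)) :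
    ∃ C ∈ SS M T, C ≠ B' := by
  have hM0 : 0 < M := by omega
  have hM1 : 1 < M := by omega
  set i0 : Fin M := ⟨0, hM0⟩ with hi0
  set i1 : Fin M := ⟨1, hM1⟩ with hi1
  have h01 : i0 ≠ i1 := by
    simp [hi0, hi1, Fin.ext_iff]
  have h0 : ({i0} : Finset (Fin M)) ∈ SS M T :=
    mem_SS.mpr ⟨Finset.singleton_nonempty _, by simp [hT1]⟩
  have h1 : ({i1} : Finset (Fin M)) ∈ SS M T :=
    mem_SS.mpr ⟨Finset.singleton_nonempty _, by simp [hT1]⟩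
  by_cases hB : ({i0} : Finset (Fin M)) = B'
  · refine ⟨{i1}, h1, ?_⟩
    rw [← hB]
    intro h
    exact h01 (Finset.mem_singleton.mp (h ▸ Finset.mem_singleton_self i1)).symm
  · exact ⟨{i0}, h0, hB⟩

lemma sSet_finite (B' : Finset (Fin M)) : {C | C ∈ SS M T ∧ C ≠ B'}.Finite :=
  Set.Finite.subset (SS M T).finite_toSet fun C hC => hC.1

lemma minScore_le (xs : Fin M → Fin n → X) {B' C : Finset (Fin M)}
    (hC : C ∈ SS M T ∧ C ≠ B') : minScore T B' xs ≤ score C xs := by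
  rw [minScore]
  exact csInf_le ((sSet_finite B').image _).bddBelow (Set.mem_image_of_mem _ hC)

lemma le_minScore (xs : Fin M → Fin n → X) {B' : Finset (Fin M)} {c : ℝ}
    (hne : ∃ C, C ∈ SS M T ∧ C ≠ B')
    (h : ∀ C, C ∈ SS M T ∧ C ≠ B' → c ≤ score C xs) : c ≤ minScore T B' xs := by
  rw [minScore]
  obtain ⟨C, hC⟩ := hne
  refine le_csInf ⟨score C xs, Set.mem_image_of_mem _ hC⟩ ?_
  rintro r ⟨C', hC', rfl⟩
  exact h C' hC'

lemma GDmin_eq_image : {r | ∃ C, (C ∈ SS M T ∧ C ≠ B) ∧ r = GD B C PN PA}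
    = (fun C => GD B C PN PA) '' {C | C ∈ SS M T ∧ C ≠ B} := by
  ext r
  constructor
  · rintro ⟨C, hC, rfl⟩; exact ⟨C, hC, rfl⟩
  · rintro ⟨C, hC, rfl⟩; exact ⟨C, hC, rfl⟩

lemma GDmin_le (hne : ∃ C, C ∈ SS M T ∧ C ≠ B) {C : Finset (Fin M)}
    (hC : C ∈ SS M T ∧ C ≠ B) : GDmin T B PN PA ≤ GD B C PN PA := by
  rw [GDmin, GDmin_eq_image]
  exact csInf_le ((sSet_finite B).image _).bddBelow (Set.mem_image_of_mem _ hC)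

lemma GDmin_attained (hne : ∃ C, C ∈ SS M T ∧ C ≠ B) :
    ∃ C, (C ∈ SS M T ∧ C ≠ B) ∧ GD B C PN PA = GDmin T B PN PA := by
  have hfin : ((fun C => GD B C PN PA) '' {C | C ∈ SS M T ∧ C ≠ B}).Finite :=
    (sSet_finite B).image _
  have hnem : ((fun C => GD B C PN PA) '' {C | C ∈ SS M T ∧ C ≠ B}).Nonempty := by
    obtain ⟨C, hC⟩ := hne
    exact ⟨_, Set.mem_image_of_mem _ hC⟩
  have := Set.Nonempty.csInf_mem hnem hfin
  obtain ⟨C, hC, hCeq⟩ := this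
  refine ⟨C, hC, ?_⟩
  rw [GDmin, GDmin_eq_image]
  exact hCeq

lemma psi_ne_none (hM : 3 ≤ M) (hT1 : 1 ≤ T) (hTM : T < M) (hB : B ∈ SS M T)
    (hlam : 0 < lam) (hlt : lam < GDmin T B PN PA) {xs : Fin M → Fin n → X}
    (hsc : ∀ C ∈ SS M T, |score C xs - GD B C PN PA|
      < min lam ((GDmin T B PN PA - lam) / 2)) :
    Psi T lam xs ≠ none := by
  set ε := min lam ((GDmin T B PN PA - lam) / 2) with hε
  have hεlam : ε ≤ lam := min_le_left _ _
  have hε2 : ε ≤ (GDmin T B PN PA - lam) / 2 := min_le_right _ _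
  have hne : ∃ C, C ∈ SS M T ∧ C ≠ B := by
    obtain ⟨C, hC1, hC2⟩ := exists_SS_ne hM hT1 B; exact ⟨C, hC1, hC2⟩
  have hlm : lam < minScore T B xs := by
    have h2 : GDmin T B PN PA - ε ≤ minScore T B xs := by
      refine le_minScore xs hne fun C hC => ?_
      have habs := hsc C hC.1
      rw [abs_sub_lt_iff] at habs
      have := GDmin_le (PN := PN) (PA := PA) hne hC
      linarith [habs.2]
    linarith
  have hcond : ∃ B' ∈ SS M T, score B' xs < minScore T B' xs ∧ lam < minScore T B' xs := by
    refine ⟨B, hB, ?_, hlm⟩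
    have hsB := hsc B hB
    rw [GD_self (lt_of_le_of_lt (mem_SS.mp hB).2 hTM), sub_zero] at hsB
    calc score B xs ≤ |score B xs| := le_abs_self _
      _ < ε := hsB
      _ ≤ lam := hεlam
      _ < minScore T B xs := hlm
  unfold Psi
  rw [dif_pos hcond]
  simp

lemma psi_eq_none (hM : 3 ≤ M) (hT1 : 1 ≤ T) (hTM : T < M) (hB : B ∈ SS M T)
    (hlam : 0 < lam) (hgt : GDmin T B PN PA < lam) {xs : Fin M → Fin n → X}
    (hsc : ∀ C ∈ SS M T, |score C xs - GD B C PN PA|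
      < min lam ((lam - GDmin T B PN PA) / 2)) :
    Psi T lam xs = none := by
  set ε := min lam ((lam - GDmin T B PN PA) / 2) with hε
  have hεlam : ε ≤ lam := min_le_left _ _
  have hε2 : ε ≤ (lam - GDmin T B PN PA) / 2 := min_le_right _ _
  have hne : ∃ C, C ∈ SS M T ∧ C ≠ B := by
    obtain ⟨C, hC1, hC2⟩ := exists_SS_ne hM hT1 B; exact ⟨C, hC1, hC2⟩
  unfold Psi
  rw [dif_neg]
  rintro ⟨B', hB', hless, hlmin⟩
  by_cases hBB : B' = B
  · subst hBB
    obtain ⟨C₀, hC₀, hGDC₀⟩ := GDmin_attained (PN := PN) (PA := PA) hne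
    have h1 : minScore T B' xs ≤ score C₀ xs := minScore_le xs hC₀
    have habs := hsc C₀ hC₀.1
    rw [abs_sub_lt_iff] at habs
    have := habs.1
    linarith [hGDC₀ ▸ this]
  · have hBmem : B ∈ SS M T ∧ B ≠ B' := ⟨hB, fun h => hBB h.symm⟩
    have h1 : minScore T B' xs ≤ score B xs := minScore_le xs hBmem
    have hsB := hsc B hB
    rw [GD_self (lt_of_le_of_lt (mem_SS.mp hB).2 hTM), sub_zero] at hsB
    have : score B xs < ε := lt_of_abs_lt hsB
    linarith

end dec
end PT

/-- (Phase transition.) Fix `B ∈ S` and a valid tuple of distributions. If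
the threshold satisfies `0 < λ < GD(B, P_N, P_B)` then the false reject probability of `Ψ_n`
vanishes as `n → ∞`; conversely if `λ > GD(B, P_N, P_B)` then it tends to one. -/
theorem false_reject_phase_transition
    {X : Type*} [Fintype X] [DecidableEq X] (M T : ℕ) (hM : 3 ≤ M) (hT : T = (M - 1) / 2)
    (PN : X → ℝ) (PA : ℕ → X → ℝ) (hP : ValidTuple T PN PA)
    (B : Finset (Fin M)) (hB : B ∈ SS M T) (lam : ℝ) (hlam : 0 < lam) :
    (lam < GDmin T B PN PA →
      Filter.Tendsto
        (fun n : ℕ => zetaT (M := M) (n := n) (fun xs => Psi T lam xs) B PN PA)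
        Filter.atTop (nhds 0)) ∧
    (GDmin T B PN PA < lam →
      Filter.Tendsto
        (fun n : ℕ => zetaT (M := M) (n := n) (fun xs => Psi T lam xs) B PN PA)
        Filter.atTop (nhds 1)) := by
  classical
  rcases isEmpty_or_nonempty X with hX | hX
  · exfalso
    have h1 := hP.1.2
    rw [Finset.univ_eq_empty, Finset.sum_empty] at h1
    norm_num at h1
  have hBT : B.card ≤ T := (PT.mem_SS.mp hB).2
  have hT1 : 1 ≤ T := by omega
  have hTM : T < M := by omega
  have hp0 := PT.pdist_nonneg hP hBT
  have hp1 := PT.pdist_sum hP hBT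
  have hsupp : ∀ {n : ℕ} (xs : Fin M → Fin n → X),
      (∏ i, ∏ k, pdist B PN PA i (xs i k)) ≠ 0 →
      ∀ i x, PN x = 0 → emp (xs i) x = 0 := by
    intro n xs hw i x hx
    rw [emp]
    have hempty : (Finset.univ.filter fun k => xs i k = x) = ∅ := by
      refine Finset.filter_eq_empty_iff.mpr fun k _ => ?_
      intro hk
      have hne : pdist B PN PA i (xs i k) ≠ 0 := by
        intro h0
        exact hw (Finset.prod_eq_zero (Finset.mem_univ i)
          (Finset.prod_eq_zero (Finset.mem_univ k) h0))
      rw [hk] at hne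
      exact hne (PT.pdist_zero hP hBT i hx)
    rw [hempty]
    simp
  constructor
  · intro hlt
    set ε := min lam ((GDmin T B PN PA - lam) / 2) with hεdef
    have hε : 0 < ε := lt_min hlam (by linarith)
    obtain ⟨δ, hδ, hδ'⟩ := PT.scores_close hP hBT hTM hε
    have key : ∀ n : ℕ, 0 < n →
        zetaT (M := M) (n := n) (fun xs => Psi T lam xs) B PN PA
          ≤ ((M * Fintype.card X : ℕ) / δ^2) / n := by
      intro n hn
      rw [zetaT]
      refine le_trans (PT.probB_mono hp0 fun xs hw hnone => ?_) (PT.probB_bad hP hBT hn hδ)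
      intro hgood
      refine PT.psi_ne_none hM hT1 hTM hB hlam hlt
        (fun C hC => hδ' (fun i => emp (xs i)) (hsupp xs hw) (fun i x => hgood i x) C hC) hnone
    refine tendsto_of_tendsto_of_tendsto_of_le_of_le' tendsto_const_nhds
      (tendsto_const_div_atTop_nhds_zero_nat (((M * Fintype.card X : ℕ) : ℝ) / δ^2)) ?_ ?_
    · exact Filter.Eventually.of_forall fun n => PT.probB_nonneg hp0 _
    · filter_upwards [Filter.eventually_gt_atTop 0] with n hn
      exact key n hn
  · intro hgt
    set ε := min lam ((lam - GDmin T B PN PA) / 2) with hεdef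
    have hε : 0 < ε := lt_min hlam (by linarith)
    obtain ⟨δ, hδ, hδ'⟩ := PT.scores_close hP hBT hTM hε
    have key : ∀ n : ℕ, 0 < n →
        1 - ((M * Fintype.card X : ℕ) / δ^2) / n
          ≤ zetaT (M := M) (n := n) (fun xs => Psi T lam xs) B PN PA := by
      intro n hn
      rw [zetaT]
      have h1 : probB n B PN PA (fun xs => ∀ i a, |emp (xs i) a - pdist B PN PA i a| < δ)
          ≤ probB n B PN PA (fun xs => Psi T lam xs = none) := by
        refine PT.probB_mono hp0 fun xs hw hgood => ?_
        exact PT.psi_eq_none hM hT1 hTM hB hlam hgt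
          (fun C hC => hδ' (fun i => emp (xs i)) (hsupp xs hw) (fun i x => hgood i x) C hC)
      have h2 := PT.probB_total hp1
        (fun xs : Fin M → Fin n → X => ∀ i a, |emp (xs i) a - pdist B PN PA i a| < δ)
      have h3 := PT.probB_bad hP hBT hn hδ
      linarith
    have hg : Filter.Tendsto (fun n : ℕ => 1 - (((M * Fintype.card X : ℕ) : ℝ) / δ^2) / n)
        Filter.atTop (nhds 1) := by
      have := (tendsto_const_div_atTop_nhds_zero_nat
        (((M * Fintype.card X : ℕ) : ℝ) / δ^2)).const_sub 1
      simpa using this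
    refine tendsto_of_tendsto_of_tendsto_of_le_of_le' hg tendsto_const_nhds ?_ ?_
    · filter_upwards [Filter.eventually_gt_atTop 0] with n hn
      exact key n hn
    · exact Filter.Eventually.of_forall fun n => PT.probB_le_one hp0 hp1 _
end
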